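/- Let $k$ be a perfect field of characteristic $p>0$ and $R$ an $A$-algebra for a $k$-algebra $A$. The map $\bar v : B^1_{R/k} \to W_* B^1_{R/A}$ induced by the canonical projection $\Omega^1_{R/k} \to \Omega^1_{R/A}$ is surjective; concretely, for $r_1, r_2, r_3 \in R$ and $a \in A$ one has $(r_1 \cdot (r_2 \otimes a)) \cdot dr_3 = \bar v(d(\psi(a) r_1^p r_2^p r_3))$ in $B^1_{R/A}$. -/

import Mathlib

open TensorProduct KaehlerDifferential

/-- `(F_A)_* M`: the module `M` with `A`-action restricted along the absolute Frobenius. -/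
def FrobPush (p : ℕ) (A : Type*) [CommSemiring A] [ExpChar A p]
    (M : Type*) [AddCommMonoid M] [Module A M] : Type _ := M

instance (p : ℕ) (A : Type*) [CommSemiring A] [ExpChar A p]
    (M : Type*) [AddCommMonoid M] [Module A M] :
    AddCommMonoid (FrobPush p A M) := inferInstanceAs (AddCommMonoid M)

noncomputable instance (p : ℕ) (A : Type*) [CommSemiring A] [ExpChar A p]
    (M : Type*) [AddCommMonoid M] [Module A M] :
    Module A (FrobPush p A M) := Module.compHom M (frobenius A p)

/-- The identity map of `M`, viewed as landing in `(F_A)_* M`. -/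
def FrobPush.mk (p : ℕ) (A : Type*) [CommSemiring A] [ExpChar A p]
    (M : Type*) [AddCommMonoid M] [Module A M] : M → FrobPush p A M := id

/-- `B¹_{A/k} ⊆ (F_A)_* Ω¹_{A/k}`: the submodule generated by exact differentials.
For the pair `(A, R)` the Frobenius-twisted `R`-action (`r • ω = rᵖ ω`) realizes
`W_* B¹_{R/A}`: the restriction along the arithmetic Frobenius `W : R → R^{(p)}` of
`B¹_{R/A}` viewed as an `R^{(p)}`-module via the relative Frobenius
`F(r ⊗ a) = ψ(a) rᵖ`, since `W` followed by this action is the absolute Frobenius. -/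
noncomputable def B1 (p : ℕ) (k A : Type*) [CommRing k] [CommRing A] [Algebra k A]
    [ExpChar A p] : Submodule A (FrobPush p A (Ω[A⁄k])) :=
  Submodule.span A (Set.range fun a : A => FrobPush.mk p A (Ω[A⁄k]) (KaehlerDifferential.D k A a))

lemma my_charP (R : Type*) [AddCommMonoidWithOne R] (p : ℕ) [Fact p.Prime] [h : ExpChar R p] :
    CharP R p := by
  cases h with
  | zero => exact absurd (Fact.out : Nat.Prime 1) Nat.not_prime_one
  | prime _ => assumption

lemma D_pow_mul (p : ℕ) [Fact p.Prime] (A R : Type*) [CommRing A] [CommRing R] [Algebra A R]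
    [ExpChar R p] (r s : R) :
    KaehlerDifferential.D A R (r ^ p * s) = r ^ p • KaehlerDifferential.D A R s := by
  have : CharP R p := my_charP R p
  rw [Derivation.leibniz, Derivation.leibniz_pow, ← Nat.cast_smul_eq_nsmul R,
    CharP.cast_eq_zero R p, zero_smul, smul_zero, add_zero]

lemma D_key (p : ℕ) [Fact p.Prime] (A R : Type*) [CommRing A] [CommRing R] [Algebra A R]
    [ExpChar R p] (a : A) (r₁ r₂ r₃ : R) :
    KaehlerDifferential.D A R (algebraMap A R a * r₁ ^ p * r₂ ^ p * r₃) =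
      (algebraMap A R a * r₁ ^ p * r₂ ^ p) • KaehlerDifferential.D A R r₃ := by
  have h1 : algebraMap A R a * r₁ ^ p * r₂ ^ p * r₃ = a • (r₁ ^ p * (r₂ ^ p * r₃)) := by
    rw [Algebra.smul_def]; ring
  rw [h1, Derivation.map_smul, D_pow_mul, D_pow_mul, ← algebraMap_smul R a, smul_smul, smul_smul,
    mul_assoc]

lemma FrobPush.smul_mk (p : ℕ) (A : Type*) [CommSemiring A] [ExpChar A p]
    (M : Type*) [AddCommMonoid M] [Module A M] (r : A) (x : M) :
    r • FrobPush.mk p A M x = FrobPush.mk p A M (frobenius A p r • x) := rfl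

/-- Let `k` be a perfect field of characteristic `p > 0`, `A` a
`k`-algebra and `R` an `A`-algebra.  The map `v̄ : B¹_{R/k} → W_* B¹_{R/A}` induced by
the canonical projection `Ω¹_{R/k} → Ω¹_{R/A}` is surjective; concretely, for
`r₁, r₂, r₃ ∈ R` and `a ∈ A` one has
`(r₁ · (r₂ ⊗ a)) · dr₃ = ψ(a) r₁ᵖ r₂ᵖ dr₃ = v̄(d(ψ(a) r₁ᵖ r₂ᵖ r₃))` in `B¹_{R/A}`. -/
theorem vbar_surjective
    (p : ℕ) [Fact p.Prime] (k A R : Type*)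
    [Field k] [CharP k p] [ExpChar k p] [PerfectRing k p]
    [CommRing A] [Algebra k A] [CommRing R] [Algebra A R] [Algebra k R]
    [IsScalarTower k A R] [ExpChar A p] [ExpChar R p]
    (vbar : B1 p k R →+ B1 p A R)
    (hv : ∀ (r : R),
      (vbar ⟨FrobPush.mk p R (Ω[R⁄k]) (KaehlerDifferential.D k R r),
          Submodule.subset_span ⟨r, rfl⟩⟩ : FrobPush p R (Ω[R⁄A])) =
        FrobPush.mk p R (Ω[R⁄A]) (KaehlerDifferential.D A R r)) :
    Function.Surjective vbar ∧
      ∀ (a : A) (r₁ r₂ r₃ : R),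
        (vbar ⟨FrobPush.mk p R (Ω[R⁄k])
            (KaehlerDifferential.D k R (algebraMap A R a * r₁ ^ p * r₂ ^ p * r₃)),
            Submodule.subset_span ⟨algebraMap A R a * r₁ ^ p * r₂ ^ p * r₃, rfl⟩⟩ :
          FrobPush p R (Ω[R⁄A])) =
        FrobPush.mk p R (Ω[R⁄A])
          ((algebraMap A R a * r₁ ^ p * r₂ ^ p) • KaehlerDifferential.D A R r₃) := by
  set gen : Set (FrobPush p R (Ω[R⁄A])) :=
    Set.range fun r : R => FrobPush.mk p R (Ω[R⁄A]) (KaehlerDifferential.D A R r) with hgen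
  set S : AddSubmonoid (FrobPush p R (Ω[R⁄A])) := AddSubmonoid.closure gen with hS
  -- Step 1: every element of B1 p A R lies in the additive closure of exact forms
  have step1 : ∀ x ∈ B1 p A R, x ∈ S := by
    intro x hx
    induction hx using Submodule.span_induction with
    | mem x hx => exact AddSubmonoid.subset_closure hx
    | zero => exact S.zero_mem
    | add x y _ _ ihx ihy => exact S.add_mem ihx ihy
    | smul r x hx ih =>
      clear hx
      induction ih using AddSubmonoid.closure_induction with
      | mem y hy =>
        obtain ⟨s, rfl⟩ := hy
        rw [FrobPush.smul_mk, frobenius_def, ← D_pow_mul p A R r s]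
        exact AddSubmonoid.subset_closure ⟨r ^ p * s, rfl⟩
      | zero => rw [smul_zero]; exact S.zero_mem
      | add y z _ _ ihy ihz => rw [smul_add]; exact S.add_mem ihy ihz
  -- Step 2: every element of the closure is hit by vbar
  have step2 : ∀ x ∈ S, ∃ w : B1 p k R, (vbar w : FrobPush p R (Ω[R⁄A])) = x := by
    intro x hx
    induction hx using AddSubmonoid.closure_induction with
    | mem y hy =>
      obtain ⟨r, rfl⟩ := hy
      exact ⟨⟨_, Submodule.subset_span ⟨r, rfl⟩⟩, hv r⟩
    | zero => exact ⟨0, by simp⟩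
    | add y z _ _ ihy ihz =>
      obtain ⟨wy, hwy⟩ := ihy
      obtain ⟨wz, hwz⟩ := ihz
      exact ⟨wy + wz, by rw [map_add, Submodule.coe_add, hwy, hwz]⟩
  constructor
  · rintro ⟨z, hz⟩
    obtain ⟨w, hw⟩ := step2 z (step1 z hz)
    exact ⟨w, Subtype.ext hw⟩
  · intro a r₁ r₂ r₃
    rw [← D_key p A R a r₁ r₂ r₃]
    exact hv (algebraMap A R a * r₁ ^ p * r₂ ^ p * r₃)
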